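/- Let γ ∈ [0,2) and let b be the γ-anti-tree over (X, m) with counting measure m ≡ 1, intrinsic degree path metric ρ, and combinatorial balls A_k := S₀ ∪ … ∪ S_k. Then there exists C ≥ 1 such that for all k ≥ 1: C⁻¹ · k^{3γ/2} ≤ (bρ)(∂A_k) ≤ C · k^{3γ/2}, where ∂A_k := {(x,y) ∈ (A_k × (X∖A_k)) ∪ ((X∖A_k) × A_k) : b(x,y) > 0} and (bρ)(∂A_k) := Σ_{(x,y)∈∂A_k} b(x,y) ρ(x,y). -/

import Mathlib

open scoped BigOperators

/-- Vertex set of the anti-tree with sphere function `s`: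
the `k`-th sphere has `s k` elements. -/
def AntiTree (s : ℕ → ℕ) : Type := Σ k : ℕ, Fin (s k)

namespace AntiTree

/-- Standard edge weights of the anti-tree: consecutive spheres are completely connected,
and there are no other edges. -/
def wt (s : ℕ → ℕ) (x y : AntiTree s) : ℝ :=
  if x.1 + 1 = y.1 ∨ y.1 + 1 = x.1 then 1 else 0

/-- Weighted vertex degree with respect to the counting measure `m ≡ 1`. -/
noncomputable def Deg (s : ℕ → ℕ) (x : AntiTree s) : ℝ := ∑' y : AntiTree s, wt s x y

end AntiTree

/-- Intrinsic degree path (pseudo-)metric of a weighted graph `b` whose weighted degree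
function is `D`:  `ρ(x,y)` is the infimum over finite paths from `x` to `y` of
`∑_j min(1/D(x_j), 1/D(x_{j+1}))^{1/2}`. -/
noncomputable def pathMetric {X : Type*} (b : X → X → ℝ) (D : X → ℝ) (x y : X) : ℝ :=
  sInf { L : ℝ | ∃ (k : ℕ) (p : ℕ → X), p 0 = x ∧ p k = y ∧
    (∀ j < k, 0 < b (p j) (p (j + 1))) ∧
    L = ∑ j ∈ Finset.range k, Real.sqrt (min (1 / D (p j)) (1 / D (p (j + 1)))) }

/-- The intrinsic degree path metric of the anti-tree. -/
noncomputable def AntiTree.rho (s : ℕ → ℕ) : AntiTree s → AntiTree s → ℝ :=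
  pathMetric (AntiTree.wt s) (AntiTree.Deg s)

/-- Closed balls with respect to the intrinsic degree path metric. -/
noncomputable def AntiTree.ball (s : ℕ → ℕ) (x : AntiTree s) (r : ℝ) : Set (AntiTree s) :=
  {y | AntiTree.rho s x y ≤ r}

/-- The sphere function of the `γ`-anti-tree: `s (k-1) = ⌊k ^ γ⌋` for `k ≥ 1`,
i.e. `s k = ⌊(k+1) ^ γ⌋`. -/
noncomputable def gammaSphere (γ : ℝ) : ℕ → ℕ := fun k => ⌊((k : ℝ) + 1) ^ γ⌋₊
/-- `(bρ)(∂W)`: the weighted boundary measure of a set `W`, i.e. the sum of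
`b(x,y) ρ(x,y)` over all ordered pairs with exactly one of `x,y` in `W`. -/
noncomputable def boundarySum {X : Type*} (b ρ : X → X → ℝ) (W : Set X) : ℝ :=
  ∑' p : X × X,
    Set.indicator {q : X × X | (q.1 ∈ W ∧ q.2 ∉ W) ∨ (q.1 ∉ W ∧ q.2 ∈ W)}
      (fun q => b q.1 q.2 * ρ q.1 q.2) p

/-- The isoperimetric constant `h_{U,n}`: the infimum of `(bρ)(∂W) / m(W)^{(n-2)/n}`
over finite nonempty subsets `W ⊆ U`. -/
noncomputable def isoConst {X : Type*} (b ρ : X → X → ℝ) (m : X → ℝ) (U : Set X) (n : ℝ) : ℝ :=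
  sInf { h : ℝ | ∃ W : Finset X, ↑W ⊆ U ∧ W.Nonempty ∧
    h = boundarySum b ρ ↑W / (∑ x ∈ W, m x) ^ ((n - 2) / n) }

namespace MyAux

variable (s : ℕ → ℕ)

instance : DecidableEq (AntiTree s) := inferInstanceAs (DecidableEq (Σ k, Fin (s k)))

/-- The `j`-th sphere as a finset. -/
def lev (j : ℕ) : Finset (AntiTree s) :=
  ({j} : Finset ℕ).sigma (fun l => (Finset.univ : Finset (Fin (s l))))

lemma mem_lev {j : ℕ} {x : AntiTree s} : x ∈ lev s j ↔ x.1 = j := by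
  rw [lev]; exact Finset.mem_sigma.trans (by simp)

lemma card_lev (j : ℕ) : (lev s j).card = s j := by
  rw [lev]; exact (Finset.card_sigma _ _).trans (by simp)

lemma wt_nonneg (x y : AntiTree s) : 0 ≤ AntiTree.wt s x y := by
  unfold AntiTree.wt; split <;> norm_num

lemma wt_le_one (x y : AntiTree s) : AntiTree.wt s x y ≤ 1 := by
  unfold AntiTree.wt; split <;> norm_num

lemma wt_pos_iff {x y : AntiTree s} :
    0 < AntiTree.wt s x y ↔ (x.1 + 1 = y.1 ∨ y.1 + 1 = x.1) := by
  unfold AntiTree.wt; split <;> simp_all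

lemma deg_eq_sum (x : AntiTree s) :
    AntiTree.Deg s x = ∑ y ∈ lev s (x.1 - 1) ∪ lev s (x.1 + 1), AntiTree.wt s x y := by
  apply tsum_eq_sum
  intro y hy
  unfold AntiTree.wt
  rw [if_neg]
  intro h
  apply hy
  rw [Finset.mem_union, mem_lev, mem_lev]
  omega

lemma deg_le (x : AntiTree s) :
    AntiTree.Deg s x ≤ (s (x.1 - 1) : ℝ) + s (x.1 + 1) := by
  rw [deg_eq_sum]
  calc ∑ y ∈ lev s (x.1 - 1) ∪ lev s (x.1 + 1), AntiTree.wt s x y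
      ≤ ∑ _y ∈ lev s (x.1 - 1) ∪ lev s (x.1 + 1), (1 : ℝ) :=
        Finset.sum_le_sum (fun y _ => wt_le_one s x y)
    _ = ((lev s (x.1 - 1) ∪ lev s (x.1 + 1)).card : ℝ) := by
        rw [Finset.sum_const, nsmul_eq_mul, mul_one]
    _ ≤ (s (x.1 - 1) : ℝ) + s (x.1 + 1) := by
        have := Finset.card_union_le (lev s (x.1 - 1)) (lev s (x.1 + 1))
        rw [card_lev, card_lev] at this
        exact_mod_cast this

lemma le_deg (x : AntiTree s) : (s (x.1 + 1) : ℝ) ≤ AntiTree.Deg s x := by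
  rw [deg_eq_sum]
  have h1 : ∑ y ∈ lev s (x.1 + 1), AntiTree.wt s x y = (s (x.1 + 1) : ℝ) := by
    rw [Finset.sum_congr rfl (fun y hy => ?_), Finset.sum_const, nsmul_eq_mul,
      mul_one, card_lev]
    unfold AntiTree.wt
    rw [if_pos (Or.inl ((mem_lev s).mp hy).symm)]
  rw [← h1]
  exact Finset.sum_le_sum_of_subset_of_nonneg Finset.subset_union_right
    (fun y _ _ => wt_nonneg s x y)

lemma exists_cross (L : ℕ → ℕ) (K a : ℕ) (h0 : L 0 ≤ a) (hK : a < L K) :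
    ∃ j < K, L j ≤ a ∧ a < L (j + 1) := by
  induction K with
  | zero => omega
  | succ K ih =>
    by_cases h : L K ≤ a
    · exact ⟨K, Nat.lt_succ_self K, h, hK⟩
    · obtain ⟨j, hj, h1, h2⟩ := ih (by omega)
      exact ⟨j, hj.trans (Nat.lt_succ_self K), h1, h2⟩

lemma exists_cross' (L : ℕ → ℕ) (K a : ℕ) (h0 : a < L 0) (hK : L K ≤ a) :
    ∃ j < K, a < L j ∧ L (j + 1) ≤ a := by
  induction K with
  | zero => omega
  | succ K ih =>
    by_cases h : a < L K
    · exact ⟨K, Nat.lt_succ_self K, h, hK⟩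
    · obtain ⟨j, hj, h1, h2⟩ := ih (by omega)
      exact ⟨j, hj.trans (Nat.lt_succ_self K), h1, h2⟩

/-- Membership of the one-step path in the path set. -/
lemma one_step_mem (x y : AntiTree s) (h : x.1 + 1 = y.1 ∨ y.1 + 1 = x.1) :
    Real.sqrt (min (1 / AntiTree.Deg s x) (1 / AntiTree.Deg s y)) ∈
      { L : ℝ | ∃ (k : ℕ) (p : ℕ → AntiTree s), p 0 = x ∧ p k = y ∧
        (∀ j < k, 0 < AntiTree.wt s (p j) (p (j + 1))) ∧
        L = ∑ j ∈ Finset.range k,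
          Real.sqrt (min (1 / AntiTree.Deg s (p j)) (1 / AntiTree.Deg s (p (j + 1)))) } := by
  refine ⟨1, fun j => if j = 0 then x else y, by simp, by simp, ?_, ?_⟩
  · intro j hj
    interval_cases j
    simpa [wt_pos_iff] using h
  · simp

lemma rho_le (x y : AntiTree s) (h : x.1 + 1 = y.1 ∨ y.1 + 1 = x.1) :
    AntiTree.rho s x y ≤ Real.sqrt (min (1 / AntiTree.Deg s x) (1 / AntiTree.Deg s y)) := by
  apply csInf_le
  · refine ⟨0, ?_⟩
    rintro L ⟨k, p, -, -, -, rfl⟩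
    exact Finset.sum_nonneg fun j _ => Real.sqrt_nonneg _
  · exact one_step_mem s x y h

lemma rho_ge (a : ℕ) (c : ℝ)
    (hD : ∀ z w : AntiTree s, z.1 = a → w.1 = a + 1 →
      c ≤ Real.sqrt (min (1 / AntiTree.Deg s z) (1 / AntiTree.Deg s w)))
    (x y : AntiTree s) (h : (x.1 = a ∧ y.1 = a + 1) ∨ (x.1 = a + 1 ∧ y.1 = a)) :
    c ≤ AntiTree.rho s x y := by
  apply le_csInf
  · exact ⟨_, one_step_mem s x y (by omega)⟩
  · rintro L ⟨K, p, hp0, hpK, hpos, rfl⟩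
    have hadj : ∀ j < K, (p j).1 + 1 = (p (j + 1)).1 ∨ (p (j + 1)).1 + 1 = (p j).1 :=
      fun j hj => (wt_pos_iff s).mp (hpos j hj)
    have key : ∃ j < K, (p j).1 = a ∧ (p (j + 1)).1 = a + 1 ∨
        (p j).1 = a + 1 ∧ (p (j + 1)).1 = a := by
      rcases h with ⟨hx, hy⟩ | ⟨hx, hy⟩
      · obtain ⟨j, hj, h1, h2⟩ := exists_cross (fun j => (p j).1) K a
          (by show (p 0).1 ≤ a; rw [hp0]; omega) (by show a < (p K).1; rw [hpK]; omega)
        exact ⟨j, hj, by have := hadj j hj; omega⟩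
      · obtain ⟨j, hj, h1, h2⟩ := exists_cross' (fun j => (p j).1) K a
          (by show a < (p 0).1; rw [hp0]; omega) (by show (p K).1 ≤ a; rw [hpK]; omega)
        exact ⟨j, hj, by have := hadj j hj; omega⟩
    obtain ⟨j, hj, hcase⟩ := key
    have hterm : c ≤ Real.sqrt (min (1 / AntiTree.Deg s (p j))
        (1 / AntiTree.Deg s (p (j + 1)))) := by
      rcases hcase with ⟨h1, h2⟩ | ⟨h1, h2⟩
      · exact hD _ _ h1 h2
      · rw [min_comm]; exact hD _ _ h2 h1
    calc c ≤ _ := hterm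
      _ ≤ _ := Finset.single_le_sum
          (f := fun i => Real.sqrt (min (1 / AntiTree.Deg s (p i))
            (1 / AntiTree.Deg s (p (i + 1)))))
          (fun i _ => Real.sqrt_nonneg _) (Finset.mem_range.mpr hj)

/-- The edge-boundary pairs of the combinatorial ball `A_k` as a finset. -/
def bdry (k : ℕ) : Finset (AntiTree s × AntiTree s) :=
  (lev s k ×ˢ lev s (k + 1)) ∪ (lev s (k + 1) ×ˢ lev s k)

lemma mem_bdry {k : ℕ} {p : AntiTree s × AntiTree s} :
    p ∈ bdry s k ↔ (p.1.1 = k ∧ p.2.1 = k + 1) ∨ (p.1.1 = k + 1 ∧ p.2.1 = k) := by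
  rw [bdry, Finset.mem_union, Finset.mem_product, Finset.mem_product,
    mem_lev, mem_lev, mem_lev, mem_lev]

lemma card_bdry (k : ℕ) : (bdry s k).card = 2 * (s k * s (k + 1)) := by
  rw [bdry, Finset.card_union_of_disjoint, Finset.card_product, Finset.card_product,
    card_lev, card_lev]
  · ring
  · rw [Finset.disjoint_left]
    intro p hp hp'
    rw [Finset.mem_product, mem_lev, mem_lev] at hp hp'
    omega

lemma boundary_eq (k : ℕ) :
    boundarySum (AntiTree.wt s) (AntiTree.rho s) {x : AntiTree s | x.1 ≤ k}
      = ∑ p ∈ bdry s k, AntiTree.rho s p.1 p.2 := by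
  classical
  unfold boundarySum
  rw [tsum_eq_sum (s := bdry s k) ?h0]
  case h0 =>
    intro p hp
    by_cases hmem : p ∈ {q : AntiTree s × AntiTree s |
        (q.1 ∈ {x : AntiTree s | x.1 ≤ k} ∧ q.2 ∉ {x : AntiTree s | x.1 ≤ k}) ∨
        (q.1 ∉ {x : AntiTree s | x.1 ≤ k} ∧ q.2 ∈ {x : AntiTree s | x.1 ≤ k})}
    · rw [Set.indicator_of_mem hmem]
      have hwt : AntiTree.wt s p.1 p.2 = 0 := by
        unfold AntiTree.wt
        rw [if_neg]
        intro hadj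
        apply hp
        rw [mem_bdry]
        simp only [Set.mem_setOf_eq] at hmem
        omega
      rw [hwt, zero_mul]
    · exact Set.indicator_of_notMem hmem _
  apply Finset.sum_congr rfl
  intro p hp
  rw [mem_bdry] at hp
  have hmem : p ∈ {q : AntiTree s × AntiTree s |
      (q.1 ∈ {x : AntiTree s | x.1 ≤ k} ∧ q.2 ∉ {x : AntiTree s | x.1 ≤ k}) ∨
      (q.1 ∉ {x : AntiTree s | x.1 ≤ k} ∧ q.2 ∈ {x : AntiTree s | x.1 ≤ k})} := by
    simp only [Set.mem_setOf_eq]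
    omega
  rw [Set.indicator_of_mem hmem]
  have hwt : AntiTree.wt s p.1 p.2 = 1 := by
    unfold AntiTree.wt
    rw [if_pos (by omega)]
  rw [hwt, one_mul]

end MyAux

theorem gammaAntiTree_boundary (γ : ℝ) (hγ0 : 0 ≤ γ) (hγ2 : γ < 2) :
    ∃ C : ℝ, 1 ≤ C ∧ ∀ k : ℕ, 1 ≤ k →
      C⁻¹ * (k : ℝ) ^ (3 * γ / 2) ≤
          boundarySum (AntiTree.wt (gammaSphere γ)) (AntiTree.rho (gammaSphere γ))
            {x : AntiTree (gammaSphere γ) | x.1 ≤ k} ∧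
      boundarySum (AntiTree.wt (gammaSphere γ)) (AntiTree.rho (gammaSphere γ))
            {x : AntiTree (gammaSphere γ) | x.1 ≤ k} ≤
          C * (k : ℝ) ^ (3 * γ / 2) := by
  classical
  refine ⟨2048, by norm_num, fun k hk => ?_⟩
  set s := gammaSphere γ with hs
  have kpos : (0 : ℝ) < k := by exact_mod_cast hk
  set D : ℝ := (k : ℝ) ^ γ with hD
  have Dpos : 0 < D := Real.rpow_pos_of_pos kpos γ
  -- floor bounds for the sphere function
  have hfle : ∀ j : ℕ, (s j : ℝ) ≤ ((j : ℝ) + 1) ^ γ := by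
    intro j
    exact Nat.floor_le (by positivity)
  have hfge : ∀ j : ℕ, ((j : ℝ) + 1) ^ γ / 2 ≤ (s j : ℝ) := by
    intro j
    have t1 : (1 : ℝ) ≤ ((j : ℝ) + 1) ^ γ := by
      calc (1 : ℝ) = 1 ^ γ := (Real.one_rpow γ).symm
        _ ≤ ((j : ℝ) + 1) ^ γ :=
          Real.rpow_le_rpow zero_le_one (le_add_of_nonneg_left (Nat.cast_nonneg j)) hγ0
    have t2 : (1 : ℕ) ≤ s j := Nat.le_floor (by exact_mod_cast t1)
    have t3 : ((j : ℝ) + 1) ^ γ < (s j : ℝ) + 1 := Nat.lt_floor_add_one _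
    have t4 : (1 : ℝ) ≤ (s j : ℝ) := by exact_mod_cast t2
    linarith
  -- uniform sphere bounds near level k
  have hsle : ∀ j : ℕ, j ≤ k + 2 → (s j : ℝ) ≤ 16 * D := by
    intro j hj
    have h2 : ((j : ℝ) + 1) ^ γ ≤ ((4 : ℝ) * k) ^ γ := by
      apply Real.rpow_le_rpow (by positivity) ?_ hγ0
      have : (j + 1 : ℕ) ≤ 4 * k := by omega
      exact_mod_cast this
    have h3 : ((4 : ℝ) * k) ^ γ = (4 : ℝ) ^ γ * D := by
      rw [hD, Real.mul_rpow (by norm_num) kpos.le]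
    have h4 : (4 : ℝ) ^ γ ≤ 16 := by
      calc (4 : ℝ) ^ γ ≤ (4 : ℝ) ^ (2 : ℝ) :=
            Real.rpow_le_rpow_of_exponent_le (by norm_num) hγ2.le
        _ = 16 := by
            rw [show (2 : ℝ) = ((2 : ℕ) : ℝ) by norm_num, Real.rpow_natCast]
            norm_num
    have h5 : (4 : ℝ) ^ γ * D ≤ 16 * D := mul_le_mul_of_nonneg_right h4 Dpos.le
    calc (s j : ℝ) ≤ ((j : ℝ) + 1) ^ γ := hfle j
      _ ≤ (4 : ℝ) ^ γ * D := by rw [← h3]; exact h2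
      _ ≤ 16 * D := h5
  have hsge : ∀ j : ℕ, k ≤ j + 1 → D / 2 ≤ (s j : ℝ) := by
    intro j hj
    have h1 : D ≤ ((j : ℝ) + 1) ^ γ := by
      rw [hD]
      apply Real.rpow_le_rpow kpos.le ?_ hγ0
      exact_mod_cast hj
    linarith [hfge j]
  -- degree bounds near level k
  have hDegle : ∀ z : AntiTree s, z.1 = k ∨ z.1 = k + 1 → AntiTree.Deg s z ≤ 32 * D := by
    intro z hz
    have h1 := MyAux.deg_le s z
    have h2 := hsle (z.1 - 1) (by omega)
    have h3 := hsle (z.1 + 1) (by omega)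
    linarith
  have hDegge : ∀ z : AntiTree s, z.1 = k ∨ z.1 = k + 1 → D / 2 ≤ AntiTree.Deg s z := by
    intro z hz
    have h1 := MyAux.le_deg s z
    have h2 := hsge (z.1 + 1) (by omega)
    linarith
  have hsqrt0 : (0 : ℝ) ≤ Real.sqrt D⁻¹ := Real.sqrt_nonneg _
  -- lower bound on the sqrt of the min for a crossing edge
  have hmin_lo : ∀ z w : AntiTree s, z.1 = k → w.1 = k + 1 →
      6⁻¹ * Real.sqrt D⁻¹ ≤
        Real.sqrt (min (1 / AntiTree.Deg s z) (1 / AntiTree.Deg s w)) := by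
    intro z w hz hw
    have hz1 := hDegle z (Or.inl hz)
    have hz2 := hDegge z (Or.inl hz)
    have hw1 := hDegle w (Or.inr hw)
    have hw2 := hDegge w (Or.inr hw)
    have hzpos : 0 < AntiTree.Deg s z := lt_of_lt_of_le (by linarith) hz2
    have hwpos : 0 < AntiTree.Deg s w := lt_of_lt_of_le (by linarith) hw2
    have hmin : (36 * D)⁻¹ ≤ min (1 / AntiTree.Deg s z) (1 / AntiTree.Deg s w) := by
      apply le_min
      · rw [one_div]
        exact inv_anti₀ hzpos (by linarith)
      · rw [one_div]
        exact inv_anti₀ hwpos (by linarith)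
    have heq : Real.sqrt ((36 * D)⁻¹) = 6⁻¹ * Real.sqrt D⁻¹ := by
      rw [mul_inv, Real.sqrt_mul (by norm_num : (0:ℝ) ≤ (36:ℝ)⁻¹),
        show ((36 : ℝ)⁻¹ = (6⁻¹) ^ 2) by norm_num, Real.sqrt_sq (by norm_num)]
    calc 6⁻¹ * Real.sqrt D⁻¹ = Real.sqrt ((36 * D)⁻¹) := heq.symm
      _ ≤ _ := Real.sqrt_le_sqrt hmin
  have hrho_lo : ∀ p ∈ MyAux.bdry s k,
      6⁻¹ * Real.sqrt D⁻¹ ≤ AntiTree.rho s p.1 p.2 := by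
    intro p hp
    exact MyAux.rho_ge s k _ hmin_lo p.1 p.2 ((MyAux.mem_bdry s).mp hp)
  have hrho_up : ∀ p ∈ MyAux.bdry s k,
      AntiTree.rho s p.1 p.2 ≤ 2 * Real.sqrt D⁻¹ := by
    intro p hp
    rw [MyAux.mem_bdry] at hp
    have hadj : p.1.1 + 1 = p.2.1 ∨ p.2.1 + 1 = p.1.1 := by omega
    have h1 := MyAux.rho_le s p.1 p.2 hadj
    have hz2 := hDegge p.1 (by omega)
    have hzpos : 0 < AntiTree.Deg s p.1 := lt_of_lt_of_le (by linarith) hz2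
    have h2 : min (1 / AntiTree.Deg s p.1) (1 / AntiTree.Deg s p.2) ≤ 4 * D⁻¹ := by
      calc min (1 / AntiTree.Deg s p.1) (1 / AntiTree.Deg s p.2)
          ≤ 1 / AntiTree.Deg s p.1 := min_le_left _ _
        _ ≤ 1 / (D / 2) := one_div_le_one_div_of_le (by linarith) hz2
        _ = 2 * D⁻¹ := by field_simp
        _ ≤ 4 * D⁻¹ := by
            have : (0:ℝ) ≤ D⁻¹ := by positivity
            linarith
    have h3 : Real.sqrt (4 * D⁻¹) = 2 * Real.sqrt D⁻¹ := by
      rw [show ((4 : ℝ) * D⁻¹ = (2:ℝ)^2 * D⁻¹) by norm_num, Real.sqrt_mul (by positivity),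
        Real.sqrt_sq (by norm_num)]
    calc AntiTree.rho s p.1 p.2 ≤ _ := h1
      _ ≤ Real.sqrt (4 * D⁻¹) := Real.sqrt_le_sqrt h2
      _ = 2 * Real.sqrt D⁻¹ := h3
  -- rewrite the boundary sum as a finite sum
  rw [MyAux.boundary_eq]
  have hcard : ((MyAux.bdry s k).card : ℝ) = 2 * ((s k : ℝ) * (s (k + 1) : ℝ)) := by
    rw [MyAux.card_bdry]
    push_cast
    ring
  have hsum_lo := Finset.card_nsmul_le_sum (MyAux.bdry s k)
    (fun p => AntiTree.rho s p.1 p.2) _ hrho_lo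
  rw [nsmul_eq_mul] at hsum_lo
  have hsum_up := Finset.sum_le_card_nsmul (MyAux.bdry s k)
    (fun p => AntiTree.rho s p.1 p.2) _ hrho_up
  rw [nsmul_eq_mul] at hsum_up
  -- the key rpow identity
  have hkey : D ^ 2 * Real.sqrt D⁻¹ = (k : ℝ) ^ (3 * γ / 2) := by
    have h1 : D⁻¹ = (k : ℝ) ^ (-γ) := by rw [hD, ← Real.rpow_neg kpos.le]
    have h2 : Real.sqrt D⁻¹ = (k : ℝ) ^ (-γ / 2) := by
      rw [h1, Real.sqrt_eq_rpow, ← Real.rpow_mul kpos.le]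
      congr 1
      ring
    have h3 : D ^ 2 = (k : ℝ) ^ (γ * 2) := by
      rw [hD, ← Real.rpow_natCast ((k : ℝ) ^ γ) 2, ← Real.rpow_mul kpos.le]
      norm_num
    rw [h2, h3, ← Real.rpow_add kpos]
    congr 1
    ring
  -- cardinality bounds
  have hsk_ge := hsge k (by omega)
  have hsk1_ge := hsge (k + 1) (by omega)
  have hsk_le := hsle k (by omega)
  have hsk1_le := hsle (k + 1) (by omega)
  have hcard_ge : D ^ 2 / 2 ≤ ((MyAux.bdry s k).card : ℝ) := by
    rw [hcard]
    nlinarith [hsk_ge, hsk1_ge, Dpos.le]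
  have hcard_le : ((MyAux.bdry s k).card : ℝ) ≤ 512 * D ^ 2 := by
    rw [hcard]
    nlinarith [hsk_le, hsk1_le, Dpos.le, (Nat.cast_nonneg (s k) : (0:ℝ) ≤ (s k : ℝ)), (Nat.cast_nonneg (s (k + 1)) : (0:ℝ) ≤ (s (k + 1) : ℝ))]
  constructor
  · calc (2048 : ℝ)⁻¹ * (k : ℝ) ^ (3 * γ / 2)
        = 2048⁻¹ * (D ^ 2 * Real.sqrt D⁻¹) := by rw [hkey]
      _ ≤ ((MyAux.bdry s k).card : ℝ) * (6⁻¹ * Real.sqrt D⁻¹) := by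
          have h1 : (2048 : ℝ)⁻¹ * D ^ 2 ≤ ((MyAux.bdry s k).card : ℝ) * 6⁻¹ := by
            nlinarith [hcard_ge, sq_nonneg D]
          calc 2048⁻¹ * (D ^ 2 * Real.sqrt D⁻¹) = (2048⁻¹ * D ^ 2) * Real.sqrt D⁻¹ := by ring
            _ ≤ (((MyAux.bdry s k).card : ℝ) * 6⁻¹) * Real.sqrt D⁻¹ :=
                mul_le_mul_of_nonneg_right h1 hsqrt0
            _ = ((MyAux.bdry s k).card : ℝ) * (6⁻¹ * Real.sqrt D⁻¹) := by ring
      _ ≤ _ := hsum_lo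
  · calc ∑ p ∈ MyAux.bdry s k, AntiTree.rho s p.1 p.2
        ≤ ((MyAux.bdry s k).card : ℝ) * (2 * Real.sqrt D⁻¹) := hsum_up
      _ ≤ 2048 * (D ^ 2 * Real.sqrt D⁻¹) := by
          have h1 : ((MyAux.bdry s k).card : ℝ) * 2 ≤ 2048 * D ^ 2 := by
            nlinarith [hcard_le, sq_nonneg D]
          calc ((MyAux.bdry s k).card : ℝ) * (2 * Real.sqrt D⁻¹)
              = (((MyAux.bdry s k).card : ℝ) * 2) * Real.sqrt D⁻¹ := by ring
            _ ≤ (2048 * D ^ 2) * Real.sqrt D⁻¹ := mul_le_mul_of_nonneg_right h1 hsqrt0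
            _ = 2048 * (D ^ 2 * Real.sqrt D⁻¹) := by ring
      _ = 2048 * (k : ℝ) ^ (3 * γ / 2) := by rw [hkey]
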